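/- There exists an infinite full binary tree with nodes labeled by {a,b} that is antiregular, i.e., every two distinct nodes have non-isomorphic (as labeled trees) subtrees rooted at them. -/

import Mathlib

/-- A full infinite binary tree labeled by `{a,b}` is a function from positions
(words over `{0,1}`, i.e. `List Bool`) to labels (`Bool`, `true` = a, `false` = b). -/
def subtreeAt (t : List Bool → Bool) (w : List Bool) : List Bool → Bool :=
  fun u => t (w ++ u)

/-- A tree is antiregular if subtrees at distinct nodes differ. -/
def Antiregular (t : List Bool → Bool) : Prop :=
  ∀ w w' : List Bool, subtreeAt t w = subtreeAt t w' → w = w'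

/-- Characteristic sequence of the perfect squares. -/
def sqB (n : ℕ) : Bool := decide (Nat.sqrt n * Nat.sqrt n = n)

/-- Bit-reading channel: reads bit `|v| - 2^(log₂ |v|)` of `v`. -/
def bitC (v : List Bool) : Bool := v.getD (v.length - 2 ^ Nat.log 2 v.length) false

/-- The tree: the last bit of a position selects a channel. -/
def myT (v : List Bool) : Bool := if v.getLastD false then sqB v.length else bitC v

lemma sqB_sq (k : ℕ) : sqB (k * k) = true := by
  have hs : Nat.sqrt (k * k) = k := by simpa [pow_two] using Nat.sqrt_eq' k
  simp [sqB, hs]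

lemma sqB_between {k d : ℕ} (hd : 0 < d) (hdk : d < 2 * k + 1) :
    sqB (k * k + d) = false := by
  have h1 : Nat.sqrt (k * k + d) = k := by
    have hup : k * k + d < (k + 1) ^ 2 := by
      have : (k + 1) ^ 2 = k * k + 2 * k + 1 := by ring
      omega
    have hlt : Nat.sqrt (k * k + d) < k + 1 := Nat.sqrt_lt'.mpr hup
    have hs : Nat.sqrt (k * k) = k := by simpa [pow_two] using Nat.sqrt_eq' k
    have hge := Nat.sqrt_le_sqrt (Nat.le_add_right (k * k) d)
    rw [hs] at hge
    omega
  simp [sqB, h1]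
  omega

/-- If shifted square-sequences agree, the shifts agree. -/
lemma sqB_shift {a b : ℕ} (h : ∀ m, sqB (a + m + 1) = sqB (b + m + 1)) : a = b := by
  by_contra hne
  wlog hab : a < b generalizing a b
  · exact this (fun m => (h m).symm) (Ne.symm hne) (by omega)
  obtain ⟨k, K, hK, hKa, hKd⟩ : ∃ k K, K = k * k ∧ a + 1 ≤ K ∧ b - a < 2 * k + 1 :=
    ⟨a + b + 2, (a + b + 2) * (a + b + 2), rfl, by nlinarith, by omega⟩
  have h1 : sqB K = true := hK ▸ sqB_sq k
  have h2 : sqB (K + (b - a)) = false := hK ▸ sqB_between (by omega) (by omega)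
  have hm := h (K - a - 1)
  have e1 : a + (K - a - 1) + 1 = K := by omega
  have e2 : b + (K - a - 1) + 1 = K + (b - a) := by omega
  rw [e1, e2, h1, h2] at hm
  exact Bool.noConfusion hm

lemma getLastD_append_concat (w l : List Bool) (c d : Bool) :
    (w ++ (l ++ [c])).getLastD d = c := by
  rw [← List.append_assoc]
  exact List.getLastD_concat (a := d) (b := c) (l := w ++ l)

/-- antiregular trees exist. -/
theorem exists_antiregular_tree : ∃ t : List Bool → Bool, Antiregular t := by
  refine ⟨myT, fun w w' h => ?_⟩
  have hu : ∀ u, myT (w ++ u) = myT (w' ++ u) := fun u => congrFun h u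
  -- Step 1: lengths are equal.
  have hlen : w.length = w'.length := by
    apply sqB_shift
    intro m
    have := hu (List.replicate m true ++ [true])
    have e1 : (w ++ (List.replicate m true ++ [true])).getLastD false = true :=
      getLastD_append_concat ..
    have e2 : (w' ++ (List.replicate m true ++ [true])).getLastD false = true :=
      getLastD_append_concat ..
    simpa [myT, e1, e2, List.length_append, List.length_replicate,
      Nat.add_assoc] using this
  -- Step 2: all bits are equal.
  apply List.ext_getElem hlen
  intro i h1 h2
  set L := w.length with hL
  set k := i + L + 1 with hk
  have hik : i < 2 ^ k := lt_of_le_of_lt (by omega) (Nat.lt_two_pow_self (n := k))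
  have hLk : L < 2 ^ k := lt_of_le_of_lt (by omega) (Nat.lt_two_pow_self (n := k))
  -- position of length 2^k + i, ending in false
  set u : List Bool := List.replicate (2 ^ k + i - L - 1) false ++ [false] with hu'
  have hulen : u.length = 2 ^ k + i - L := by
    simp [hu', List.length_append, List.length_replicate]; omega
  have hvlen : (w ++ u).length = 2 ^ k + i := by
    simp [List.length_append, hulen, ← hL]; omega
  have hvlen' : (w' ++ u).length = 2 ^ k + i := by
    simp [List.length_append, hulen, ← hlen, ← hL]; omega
  have hlog : Nat.log 2 (2 ^ k + i) = k := by
    apply Nat.log_eq_of_pow_le_of_lt_pow (by omega)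
    have : 2 ^ (k + 1) = 2 ^ k + 2 ^ k := by ring
    omega
  have key := hu u
  have e1 : (w ++ u).getLastD false = false := getLastD_append_concat ..
  have e2 : (w' ++ u).getLastD false = false := getLastD_append_concat ..
  rw [myT, myT, e1, e2, if_neg (by simp), if_neg (by simp)] at key
  rw [bitC, bitC, hvlen, hvlen', hlog] at key
  have hi : 2 ^ k + i - 2 ^ k = i := by omega
  rw [hi, List.getD_append _ _ _ _ (by omega), List.getD_append _ _ _ _ (by omega)] at key
  simpa [List.getD_eq_getElem?_getD, List.getElem?_eq_getElem h1,
    List.getElem?_eq_getElem h2] using key
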